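/- Let (X, S) be the subshift of {0,1}^ℕ generated by the shift-orbit closure of the Morse sequence (the fixed point starting with 0 of the substitution σ(0) = 01, σ(1) = 10), and let ζ = {[0], [1]}. Then the lower local rate of Poincaré recurrence satisfies R̲_ζ(x) ≥ 1 for every x ∈ X. In particular, (X, S) is a zero-entropy system whose lower local rate of Poincaré recurrence is at least 1 everywhere, so the converse of the implication 'positive entropy implies lower rate ≥ 1 almost everywhere' is false. -/

import Mathlib

open MeasureTheory Filter Set
open scoped ENNReal

/-- The one-sided shift on `{0,1}^ℕ`. -/
def shiftN (x : ℕ → Bool) : ℕ → Bool := fun n => x (n + 1)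

/-- `m` is the fixed point starting with `0` of the Morse substitution
`σ(0) = 01`, `σ(1) = 10` (with `false = 0`, `true = 1`): `σ(m) = m` reads
`m(2k) = m(k)` and `m(2k+1) = ¬ m(k)`. -/
def IsMorseSequence (m : ℕ → Bool) : Prop :=
  m 0 = false ∧ ∀ k : ℕ, m (2 * k) = m k ∧ m (2 * k + 1) = !m k

/-- The subshift generated by the shift-orbit closure of the sequence `m`. -/
def orbitClosure (m : ℕ → Bool) : Set (ℕ → Bool) :=
  closure {y | ∃ k : ℕ, y = shiftN^[k] m}

/-- The Poincaré recurrence of a set `U` : `τ(U) = inf {k ≥ 1 : S^k U ∩ U ≠ ∅}`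
(`∞` if no such `k` exists). -/
noncomputable def recOfSet {X : Type*} (T : X → X) (U : Set X) : ℝ≥0∞ :=
  sInf {t : ℝ≥0∞ | ∃ k : ℕ, 1 ≤ k ∧ (T^[k] '' U ∩ U).Nonempty ∧ t = k}

/-- The atom `ζ_n(x)` of the refined partition `ζ ∨ S⁻¹ζ ∨ ⋯ ∨ S^{-n+1}ζ` of `X`,
where `ζ = {[0],[1]}` is the partition into `1`-cylinders. -/
def cylAtomN (X : Set (ℕ → Bool)) (n : ℕ) (x : ℕ → Bool) : Set (ℕ → Bool) :=
  {y ∈ X | ∀ k : ℕ, k < n → y k = x k}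

/-- The lower local rate of Poincaré recurrence `R̲_ζ(x) = liminf_n τ(ζ_n(x))/n`
for the partition `ζ = {[0],[1]}`. -/
noncomputable def lowerRateCylN (X : Set (ℕ → Bool)) (x : ℕ → Bool) : ℝ≥0∞ :=
  atTop.liminf fun n : ℕ => recOfSet shiftN (cylAtomN X n x) / (n : ℝ≥0∞)

/-- The Shannon entropy `H_μ(ζ_n)` of the refined partition `ζ_n` for the partition
`ζ = {[0],[1]}`; its atoms are the `n`-cylinders, indexed by words `w : Fin n → Bool`. -/
noncomputable def cylEntropy (μ : Measure (ℕ → Bool)) (n : ℕ) : ℝ :=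
  ∑ w : Fin n → Bool,
    Real.negMulLog (μ {y | ∀ k : Fin n, y (k : ℕ) = w k}).toReal


lemma morse_noAAA {m : ℕ → Bool} (hm : IsMorseSequence m) (a : ℕ) :
    ¬ (m a = m (a + 1) ∧ m (a + 1) = m (a + 2)) := by
  have h := hm.2
  rintro ⟨h1, h2⟩
  rcases Nat.even_or_odd a with ⟨k, hk⟩ | ⟨k, hk⟩
  · have e1 : a = 2 * k := by omega
    have e2 : a + 1 = 2 * k + 1 := by omega
    rw [e2, e1, (h k).1, (h k).2] at h1
    exact absurd h1 (by cases m k <;> simp)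
  · have e1 : a + 1 = 2 * (k + 1) := by omega
    have e2 : a + 2 = 2 * (k + 1) + 1 := by omega
    rw [e1, e2, (h (k+1)).1, (h (k+1)).2] at h2
    exact absurd h2 (by cases m (k+1) <;> simp)

/-- The Thue–Morse sequence is overlap-free. -/

lemma morse_no_overlap {m : ℕ → Bool} (hm : IsMorseSequence m) :
    ∀ p : ℕ, 1 ≤ p → ∀ i : ℕ, ¬ (∀ j ≤ p, m (i + j) = m (i + j + p)) := by
  have he : ∀ k, m (2 * k) = m k := fun k => (hm.2 k).1
  have ho : ∀ k, m (2 * k + 1) = !m k := fun k => (hm.2 k).2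
  intro p
  induction p using Nat.strong_induction_on with
  | _ p IH =>
  intro hp i H
  rcases Nat.even_or_odd p with ⟨q, hq⟩ | ⟨q, hq⟩
  · -- p = 2q, q ≥ 1
    have hq1 : 1 ≤ q := by omega
    rcases Nat.even_or_odd i with ⟨a, ha⟩ | ⟨a, ha⟩
    · refine IH q (by omega) hq1 a ?_
      intro t ht
      have h1 := H (2 * t) (by omega)
      have e1 : i + 2 * t = 2 * (a + t) := by omega
      have e2 : i + 2 * t + p = 2 * (a + t + q) := by omega
      rw [e2, e1, he, he] at h1
      simpa using h1
    · refine IH q (by omega) hq1 a ?_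
      intro t ht
      have h1 := H (2 * t) (by omega)
      have e1 : i + 2 * t = 2 * (a + t) + 1 := by omega
      have e2 : i + 2 * t + p = 2 * (a + t + q) + 1 := by omega
      rw [e2, e1, ho, ho] at h1
      exact Bool.not_inj h1
  · -- p = 2q+1 odd
    rcases Nat.eq_zero_or_pos q with rfl | hq1
    · -- p = 1 : three equal consecutive letters
      have h0 := H 0 (by omega)
      have h1 := H 1 (by omega)
      norm_num at h0 h1
      rw [show i + p = i + 1 by omega] at h0
      rw [show i + 1 + p = i + 2 by omega] at h1
      exact morse_noAAA hm i ⟨h0, h1⟩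
    · rcases Nat.even_or_odd i with ⟨a, ha⟩ | ⟨c, hc⟩
      · -- i even: m(a+t) = !m(a+t+q) and m(a+t) = !m(a+t+q+1) for t = 0,1
        have key : ∀ t, t ≤ 1 → m (a + q + t) = m (a + q + t + 1) := by
          intro t ht
          have hE := H (2 * t) (by omega)
          have hO := H (2 * t + 1) (by omega)
          have e1 : i + 2 * t = 2 * (a + t) := by omega
          have e2 : i + 2 * t + p = 2 * (a + t + q) + 1 := by omega
          have e3 : i + (2 * t + 1) = 2 * (a + t) + 1 := by omega
          have e4 : i + (2 * t + 1) + p = 2 * (a + t + q + 1) := by omega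
          rw [e2, e1, he, ho] at hE
          rw [e4, e3, ho, he] at hO
          -- hE : m (a+t) = !m (a+t+q) ; hO : !m (a+t) = m (a+t+q+1)
          have e5 : a + q + t = a + t + q := by omega
          rw [e5, ← hO, hE]
          cases m (a + t + q) <;> simp
        have k0 := key 0 (by omega)
        have k1 := key 1 (by omega)
        have e7 : a + q + 0 = a + q := by omega
        have e8 : a + q + 0 + 1 = a + q + 1 := by omega
        have e9 : a + q + 1 + 1 = a + q + 2 := by omega
        rw [e7, e8] at k0; rw [e9] at k1
        exact morse_noAAA hm (a + q) ⟨k0, k1⟩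
      · -- i odd: m(c+t) = !m(c+t+q+1) and m(c+t+1) = !m(c+t+q+1)
        have key : ∀ t, t ≤ 1 → m (c + t) = m (c + t + 1) := by
          intro t ht
          have hA := H (2 * t) (by omega)
          have hB := H (2 * t + 1) (by omega)
          have e1 : i + 2 * t = 2 * (c + t) + 1 := by omega
          have e2 : i + 2 * t + p = 2 * (c + t + q + 1) := by omega
          have e3 : i + (2 * t + 1) = 2 * (c + t + 1) := by omega
          have e4 : i + (2 * t + 1) + p = 2 * (c + t + q + 1) + 1 := by omega
          rw [e2, e1, ho, he] at hA
          rw [e4, e3, he, ho] at hB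
          -- hA : !m (c+t) = m (c+t+q+1) ; hB : m (c+t+1) = !m (c+t+q+1)
          rw [hB, ← hA]
          cases m (c + t) <;> simp
        have k0 := key 0 (by omega)
        have k1 := key 1 (by omega)
        have e7 : c + 0 = c := by omega
        have e8 : c + 0 + 1 = c + 1 := by omega
        have e9 : c + 1 + 1 = c + 2 := by omega
        rw [e7, e8] at k0; rw [e9] at k1
        exact morse_noAAA hm c ⟨k0, k1⟩

lemma shiftN_iter (x : ℕ → Bool) (r n : ℕ) : shiftN^[r] x n = x (n + r) := by
  induction r generalizing x n with
  | zero => rfl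
  | succ r ih =>
    rw [Function.iterate_succ_apply]
    rw [ih (shiftN x) n]
    rfl

/-- every finite window at the origin of a point in the orbit closure is a factor of `m` -/

lemma orbitClosure_factor {m y : ℕ → Bool} (hy : y ∈ orbitClosure m) (N : ℕ) :
    ∃ r : ℕ, ∀ k < N, y k = m (r + k) := by
  have hopen : IsOpen {z : ℕ → Bool | ∀ k : Fin N, z (k : ℕ) = y (k : ℕ)} := by
    have : {z : ℕ → Bool | ∀ k : Fin N, z (k : ℕ) = y (k : ℕ)}
        = ⋂ k : Fin N, (fun z : ℕ → Bool => z (k : ℕ)) ⁻¹' {y (k : ℕ)} := by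
      ext z; simp [Set.mem_iInter]
    rw [this]
    exact isOpen_iInter_of_finite fun k =>
      (continuous_apply (k : ℕ)).isOpen_preimage _ (isOpen_discrete _)
  have hmem : y ∈ {z : ℕ → Bool | ∀ k : Fin N, z (k : ℕ) = y (k : ℕ)} := fun k => rfl
  have := (mem_closure_iff.1 hy) _ hopen hmem
  obtain ⟨z, hz1, k, rfl⟩ := this
  refine ⟨k, fun j hj => ?_⟩
  have := hz1 ⟨j, hj⟩
  simp only at this
  rw [← this, shiftN_iter]
  congr 1
  omega

lemma rec_ge_of_mem {m x : ℕ → Bool} (hm : IsMorseSequence m)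
    (hx : x ∈ orbitClosure m) (n : ℕ) :
    (n : ℝ≥0∞) ≤ recOfSet shiftN (cylAtomN (orbitClosure m) n x) := by
  refine le_sInf fun t ht => ?_
  obtain ⟨k, hk1, ⟨z, ⟨y, hyU, rfl⟩, hzU⟩, rfl⟩ := ht
  -- y in atom, shiftN^[k] y in atom
  by_contra hlt
  push_neg at hlt
  have hkn : k < n := by exact_mod_cast hlt
  obtain ⟨hyX, hyx⟩ := hyU
  obtain ⟨-, hzy⟩ := hzU
  -- y j = y (j + k) for j < n
  have hper : ∀ j < n, y j = y (j + k) := by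
    intro j hj
    have h1 := hyx j hj
    have h2 := hzy j hj
    rw [shiftN_iter] at h2
    rw [h1, ← h2]
  obtain ⟨r, hr⟩ := orbitClosure_factor hyX (n + k)
  refine morse_no_overlap hm k hk1 r fun j hj => ?_
  have hj1 : j < n := by omega
  have e1 := hr j (by omega)
  have e2 := hr (j + k) (by omega)
  rw [← e1, hper j hj1, e2]
  congr 1
  omega

lemma part1 {m : ℕ → Bool} (hm : IsMorseSequence m) :
    ∀ x ∈ orbitClosure m, 1 ≤ lowerRateCylN (orbitClosure m) x := by
  intro x hx
  refine le_liminf_of_le ?_ ?_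
  · isBoundedDefault
  filter_upwards [eventually_ge_atTop 1] with n hn
  have h := rec_ge_of_mem hm hx n
  have hn0 : (n : ℝ≥0∞) ≠ 0 := by
    exact_mod_cast Nat.one_le_iff_ne_zero.mp hn
  rw [ENNReal.le_div_iff_mul_le (Or.inl hn0) (Or.inl (ENNReal.natCast_ne_top n))]
  simpa using h

/-! ### Part 2: zero entropy -/

def cylSet (n : ℕ) (w : Fin n → Bool) : Set (ℕ → Bool) :=
  {y | ∀ k : Fin n, y (k : ℕ) = w k}

lemma cylSet_measurable (n : ℕ) (w : Fin n → Bool) : MeasurableSet (cylSet n w) := by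
  have : cylSet n w = ⋂ k : Fin n, (fun y : ℕ → Bool => y (k : ℕ)) ⁻¹' {w k} := by
    ext y; simp [cylSet, Set.mem_iInter]
  rw [this]
  exact MeasurableSet.iInter fun k =>
    (measurable_pi_apply (k : ℕ)) (measurableSet_singleton (w k))

lemma cylSet_disjoint (n : ℕ) : Pairwise (Function.onFun Disjoint (cylSet n)) := by
  intro w w' hww
  refine Set.disjoint_left.2 fun y hy hy' => hww ?_
  funext k
  rw [← hy k, ← hy' k]

lemma cylSet_cover (n : ℕ) : (⋃ w : Fin n → Bool, cylSet n w) = Set.univ := by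
  ext y
  simp only [Set.mem_iUnion, Set.mem_univ, iff_true]
  exact ⟨fun k => y (k : ℕ), fun k => rfl⟩

lemma sum_cylSet (μ : Measure (ℕ → Bool)) [IsProbabilityMeasure μ] (n : ℕ) :
    ∑ w : Fin n → Bool, μ (cylSet n w) = 1 := by
  rw [← tsum_fintype (L := SummationFilter.unconditional _)]
  rw [← measure_iUnion (cylSet_disjoint n) (cylSet_measurable n)]
  rw [cylSet_cover n]
  exact measure_univ

/-- the set of length-`n` factors of `m`, as words -/

noncomputable def factWords (m : ℕ → Bool) (n : ℕ) : Finset (Fin n → Bool) :=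
  @Finset.filter _ (fun w => ∃ i : ℕ, ∀ k : Fin n, m (i + (k : ℕ)) = w k)
    (Classical.decPred _) Finset.univ

lemma mem_factWords {m : ℕ → Bool} {n : ℕ} {w : Fin n → Bool} :
    w ∈ factWords m n ↔ ∃ i : ℕ, ∀ k : Fin n, m (i + (k : ℕ)) = w k := by
  classical
  simp [factWords]

/-- reconstruction of a word of length `n` from its "preimage" under the substitution -/

noncomputable def recoverWord (n : ℕ) (v : Fin (n / 2 + 1) → Bool) (b : Bool) :
    Fin n → Bool :=
  fun j => xor (v ⟨((if b then 1 else 0) + (j : ℕ)) / 2, by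
      have h1 := j.isLt
      have h2 : (if b then 1 else 0 : ℕ) ≤ 1 := by cases b <;> simp
      omega⟩)
    (decide ((((if b then 1 else 0) + (j : ℕ)) % 2) = 1))

lemma factWords_subset_image (m : ℕ → Bool) (hm : IsMorseSequence m) (n : ℕ) :
    factWords m n ⊆
      ((factWords m (n / 2 + 1)) ×ˢ (Finset.univ : Finset Bool)).image
        (fun p => recoverWord n p.1 p.2) := by
  intro w hw
  obtain ⟨i, hi⟩ := mem_factWords.1 hw
  set a := i / 2 with ha
  set b : Bool := decide (i % 2 = 1) with hb
  refine Finset.mem_image.2 ⟨⟨fun k => m (a + (k : ℕ)), b⟩, ?_, ?_⟩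
  · exact Finset.mem_product.2 ⟨mem_factWords.2 ⟨a, fun k => rfl⟩, Finset.mem_univ _⟩
  · funext j
    rw [← hi j]
    show xor (m (a + ((if b then 1 else 0) + (j : ℕ)) / 2))
      (decide ((((if b then 1 else 0) + (j : ℕ)) % 2) = 1)) = m (i + (j : ℕ))
    have hb' : (if b then 1 else 0) = i % 2 := by
      by_cases h : i % 2 = 1 <;> simp [hb, h] <;> omega
    rw [hb']
    have hc01 : (i % 2 + (j : ℕ)) % 2 = 0 ∨ (i % 2 + (j : ℕ)) % 2 = 1 := by omega
    rcases hc01 with h0 | h1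
    · have hd : i + (j : ℕ) = 2 * (a + (i % 2 + (j : ℕ)) / 2) := by omega
      rw [h0, hd, (hm.2 _).1]
      simp
    · have hd : i + (j : ℕ) = 2 * (a + (i % 2 + (j : ℕ)) / 2) + 1 := by omega
      rw [h1, hd, (hm.2 _).2]
      simp

lemma factWords_card_le (m : ℕ → Bool) (hm : IsMorseSequence m) (n : ℕ) :
    (factWords m n).card ≤ 2 * (factWords m (n / 2 + 1)).card := by
  calc (factWords m n).card
      ≤ (((factWords m (n / 2 + 1)) ×ˢ (Finset.univ : Finset Bool)).image
          (fun p => recoverWord n p.1 p.2)).card :=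
        Finset.card_le_card (factWords_subset_image m hm n)
    _ ≤ ((factWords m (n / 2 + 1)) ×ˢ (Finset.univ : Finset Bool)).card :=
        Finset.card_image_le
    _ = 2 * (factWords m (n / 2 + 1)).card := by
        rw [Finset.card_product]
        simp [mul_comm]

lemma factWords_card_le_pow (m : ℕ → Bool) (n : ℕ) :
    (factWords m n).card ≤ 2 ^ n := by
  calc (factWords m n).card ≤ (Finset.univ : Finset (Fin n → Bool)).card :=
        Finset.card_le_univ _
    _ = 2 ^ n := by simp [Finset.card_univ]

lemma factWords_card_quadratic (m : ℕ → Bool) (hm : IsMorseSequence m) :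
    ∀ n : ℕ, 1 ≤ n → (factWords m n).card ≤ 64 * n ^ 2 := by
  intro n
  induction n using Nat.strong_induction_on with
  | _ n IH =>
  intro hn
  by_cases hsmall : n ≤ 4
  · calc (factWords m n).card ≤ 2 ^ n := factWords_card_le_pow m n
      _ ≤ 64 * n ^ 2 := by interval_cases n <;> norm_num
  · push_neg at hsmall
    have h5 : 5 ≤ n := hsmall
    have hlt : n / 2 + 1 < n := by omega
    have h1 : 1 ≤ n / 2 + 1 := by omega
    have key : 2 * (n / 2 + 1) ^ 2 ≤ n ^ 2 := by
      rcases Nat.even_or_odd n with ⟨k, hk⟩ | ⟨k, hk⟩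
      · have hk3 : 3 ≤ k := by omega
        have : n / 2 + 1 = k + 1 := by omega
        rw [this, hk]
        nlinarith
      · have hk2 : 2 ≤ k := by omega
        have : n / 2 + 1 = k + 1 := by omega
        rw [this, hk]
        nlinarith
    calc (factWords m n).card ≤ 2 * (factWords m (n / 2 + 1)).card :=
          factWords_card_le m hm n
      _ ≤ 2 * (64 * (n / 2 + 1) ^ 2) :=
          Nat.mul_le_mul_left 2 (IH _ hlt h1)
      _ = 64 * (2 * (n / 2 + 1) ^ 2) := by ring
      _ ≤ 64 * n ^ 2 := Nat.mul_le_mul_left 64 key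

lemma nonfactor_null {m : ℕ → Bool} (μ : Measure (ℕ → Bool)) [IsProbabilityMeasure μ]
    (hX : μ (orbitClosure m) = 1) {n : ℕ} {w : Fin n → Bool}
    (hw : w ∉ factWords m n) : μ (cylSet n w) = 0 := by
  classical
  set U : Set (ℕ → Bool) := ⋃ v ∈ factWords m n, cylSet n v with hU
  have hUmeas : MeasurableSet U :=
    (factWords m n).measurableSet_biUnion fun v _ => cylSet_measurable n v
  have hXU : orbitClosure m ⊆ U := by
    intro y hy
    obtain ⟨r, hr⟩ := orbitClosure_factor hy n
    exact Set.mem_biUnion (mem_factWords.2 ⟨r, fun k => (hr (k : ℕ) k.isLt).symm⟩)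
      (fun k => rfl)
  have hU1 : μ U = 1 := le_antisymm prob_le_one (hX ▸ measure_mono hXU)
  have hdisj : cylSet n w ⊆ Uᶜ := by
    intro y hy hyU
    obtain ⟨v, hv, hyv⟩ := Set.mem_iUnion₂.1 hyU
    refine hw ?_
    have : w = v := by funext k; rw [← hy k, hyv k]
    rwa [this]
  refine le_antisymm ?_ (zero_le)
  calc μ (cylSet n w) ≤ μ Uᶜ := measure_mono hdisj
    _ = μ Set.univ - μ U := measure_compl hUmeas (measure_ne_top μ U)
    _ = 0 := by rw [hU1, measure_univ, tsub_self]

lemma cylEntropy_le {m : ℕ → Bool} (hm : IsMorseSequence m) (μ : Measure (ℕ → Bool))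
    [IsProbabilityMeasure μ] (hX : μ (orbitClosure m) = 1) {n : ℕ} (hn : 1 ≤ n) :
    cylEntropy μ n ≤ Real.log 64 + 2 * Real.log n := by
  classical
  set p : (Fin n → Bool) → ℝ := fun w => (μ (cylSet n w)).toReal with hp
  set s : Finset (Fin n → Bool) := Finset.univ.filter (fun w => μ (cylSet n w) ≠ 0)
    with hs
  have hzero : ∀ w ∈ Finset.univ, w ∉ s → Real.negMulLog (p w) = 0 := by
    intro w _ hw
    have : μ (cylSet n w) = 0 := by
      by_contra h
      exact hw (Finset.mem_filter.2 ⟨Finset.mem_univ _, h⟩)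
    simp [hp, this]
  have hzero' : ∀ w ∈ Finset.univ, w ∉ s → p w = 0 := by
    intro w _ hw
    have : μ (cylSet n w) = 0 := by
      by_contra h
      exact hw (Finset.mem_filter.2 ⟨Finset.mem_univ _, h⟩)
    simp [hp, this]
  have hsum_univ : ∑ w : Fin n → Bool, p w = 1 := by
    have h1 : (∑ w : Fin n → Bool, μ (cylSet n w)).toReal = (1 : ℝ≥0∞).toReal := by
      rw [sum_cylSet μ n]
    rwa [ENNReal.toReal_sum (fun w _ => measure_ne_top μ _), ENNReal.toReal_one] at h1
  have hps : ∑ w ∈ s, p w = 1 := by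
    rw [Finset.sum_subset (Finset.subset_univ s) hzero']
    exact hsum_univ
  have hH : cylEntropy μ n = ∑ w ∈ s, Real.negMulLog (p w) :=
    (Finset.sum_subset (Finset.subset_univ s) hzero).symm
  have hsne : s.Nonempty := by
    rcases Finset.eq_empty_or_nonempty s with h | h
    · rw [h, Finset.sum_empty] at hps; norm_num at hps
    · exact h
  have hN1 : 1 ≤ s.card := Finset.card_pos.2 hsne
  set N : ℝ := (s.card : ℝ) with hNdef
  have hN0 : (0 : ℝ) < N := by
    rw [hNdef]; exact_mod_cast hN1
  have key : ∀ w ∈ s, Real.negMulLog (p w) ≤ p w * Real.log N + (1 / N - p w) := by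
    intro w hw
    have hμw : μ (cylSet n w) ≠ 0 := (Finset.mem_filter.1 hw).2
    have hp0 : 0 < p w := ENNReal.toReal_pos hμw (measure_ne_top μ _)
    have h1 : Real.log ((p w * N)⁻¹) ≤ (p w * N)⁻¹ - 1 :=
      Real.log_le_sub_one_of_pos (by positivity)
    rw [Real.log_inv] at h1
    have hlogmul : Real.log (p w * N) = Real.log (p w) + Real.log N :=
      Real.log_mul hp0.ne' hN0.ne'
    have h2 := mul_le_mul_of_nonneg_left h1 hp0.le
    have h3 : p w * -Real.log (p w * N)
        = -(p w * Real.log (p w)) - p w * Real.log N := by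
      rw [hlogmul]; ring
    have h4 : p w * ((p w * N)⁻¹ - 1) = 1 / N - p w := by
      field_simp
    rw [Real.negMulLog]
    nlinarith [h2, h3, h4]
  have hsumkey : cylEntropy μ n ≤ Real.log N := by
    rw [hH]
    calc ∑ w ∈ s, Real.negMulLog (p w)
        ≤ ∑ w ∈ s, (p w * Real.log N + (1 / N - p w)) := Finset.sum_le_sum key
      _ = (∑ w ∈ s, p w) * Real.log N
          + (s.card * (1 / N) - ∑ w ∈ s, p w) := by
          rw [Finset.sum_add_distrib, Finset.sum_sub_distrib, ← Finset.sum_mul,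
            Finset.sum_const, nsmul_eq_mul]
      _ = Real.log N := by
          rw [hps, hNdef]
          field_simp
          ring
  have hcard : s.card ≤ 64 * n ^ 2 := by
    have hsub : s ⊆ factWords m n := by
      intro w hw
      by_contra hcon
      exact (Finset.mem_filter.1 hw).2 (nonfactor_null μ hX hcon)
    exact le_trans (Finset.card_le_card hsub) (factWords_card_quadratic m hm n hn)
  have hlogle : Real.log N ≤ Real.log 64 + 2 * Real.log n := by
    have h1 : Real.log N ≤ Real.log (64 * (n : ℝ) ^ 2) := by
      refine Real.log_le_log hN0 ?_
      rw [hNdef]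
      exact_mod_cast hcard
    have hn0 : (n : ℝ) ≠ 0 := by
      exact_mod_cast Nat.one_le_iff_ne_zero.mp hn
    rwa [Real.log_mul (by norm_num) (pow_ne_zero 2 hn0), Real.log_pow,
      Nat.cast_ofNat] at h1
  exact hsumkey.trans hlogle

lemma cylEntropy_nonneg (μ : Measure (ℕ → Bool)) [IsProbabilityMeasure μ] (n : ℕ) :
    0 ≤ cylEntropy μ n := by
  refine Finset.sum_nonneg fun w _ => Real.negMulLog_nonneg ENNReal.toReal_nonneg ?_
  exact ENNReal.toReal_one ▸ ENNReal.toReal_mono ENNReal.one_ne_top prob_le_one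

lemma tendsto_logBound :
    Tendsto (fun n : ℕ => (Real.log 64 + 2 * Real.log n) / n) atTop (nhds 0) := by
  have h1 : Tendsto (fun n : ℕ => Real.log 64 / n) atTop (nhds 0) :=
    tendsto_const_div_atTop_nhds_zero_nat _
  have h2 : Tendsto (fun x : ℝ => Real.log x / x) atTop (nhds 0) :=
    Real.isLittleO_log_id_atTop.tendsto_div_nhds_zero
  have h3 : Tendsto (fun n : ℕ => Real.log n / n) atTop (nhds 0) :=
    h2.comp tendsto_natCast_atTop_atTop
  have h4 := h1.add (h3.const_mul 2)
  norm_num at h4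
  refine h4.congr fun n => ?_
  ring

/-- Let `(X,S)` be the subshift generated by the shift-orbit
closure of the Morse sequence and `ζ = {[0],[1]}`. Then `R̲_ζ(x) ≥ 1` for every
`x ∈ X`, while the system has zero entropy: `h_μ(S,ζ) = 0` for every invariant
probability measure `μ` on `X`. Hence the converse of `h_μ(T,ζ) > 0 ⟹ R̲_ζ ≥ 1 a.e.`
is false. -/
theorem stmt14 (m : ℕ → Bool) (hm : IsMorseSequence m) :
    (∀ x ∈ orbitClosure m, 1 ≤ lowerRateCylN (orbitClosure m) x) ∧
      ∀ μ : Measure (ℕ → Bool), IsProbabilityMeasure μ →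
        MeasurePreserving shiftN μ μ → μ (orbitClosure m) = 1 →
        Tendsto (fun n : ℕ => cylEntropy μ n / n) atTop (nhds 0) := by
  refine ⟨part1 hm, ?_⟩
  intro μ hprob _ hX
  haveI := hprob
  refine squeeze_zero' ?_ ?_ tendsto_logBound
  · filter_upwards with n
    exact div_nonneg (cylEntropy_nonneg μ n) (Nat.cast_nonneg n)
  · filter_upwards [eventually_ge_atTop 1] with n hn
    have hb := cylEntropy_le hm μ hX hn
    have hn0 : (0 : ℝ) < n := by exact_mod_cast hn
    exact div_le_div_of_nonneg_right hb hn0.le
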